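/- For 1 ≤ n ≤ |k|, the worst case error of A_n^{QMC} on the unit ball of H̃^s exceeds the initial error (2π|k|)^{-s}, i.e., the QMC rule is worse than the zero algorithm. -/

import Mathlib

open MeasureTheory Real Complex

noncomputable section

/-- The oscillatory integral `I_k(f) = ∫₀¹ f(x) e^{-2πikx} dx`. -/
def Ik (k : ℤ) (f : ℝ → ℂ) : ℂ :=
  ∫ x in (0:ℝ)..1, f x * Complex.exp (-(2 * Real.pi * Complex.I * (k : ℂ) * (x : ℂ)))

/-- The QMC rule `A_n^{QMC}(f) = (1/n) ∑_{j=1}^n f(j/n) e^{-2πikj/n}`. -/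
def Aqmc (k : ℤ) (n : ℕ) (f : ℝ → ℂ) : ℂ :=
  (1 / (n : ℂ)) * ∑ j ∈ Finset.Icc 1 n,
    f (j / n) * Complex.exp (-(2 * Real.pi * Complex.I * (k : ℂ) * ((j : ℂ) / (n : ℂ))))

/-- Membership in (the smooth part of) the periodic Sobolev space `H̃ˢ`. -/
def memPerHs (s : ℕ) (f : ℝ → ℂ) : Prop :=
  ContDiff ℝ s f ∧ ∀ ℓ < s, iteratedDeriv ℓ f 0 = iteratedDeriv ℓ f 1

/-- The squared `H̃ˢ` norm `‖f‖² = |∫₀¹ f|² + ‖f⁽ˢ⁾‖²_{L²}`. -/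
def perNormSq (s : ℕ) (f : ℝ → ℂ) : ℝ :=
  ‖∫ x in (0:ℝ)..1, f x‖^2 + ∫ x in (0:ℝ)..1, ‖iteratedDeriv s f x‖^2

/-- The worst case error of `A_n^{QMC}` over the unit ball of `H̃ˢ`. -/
def wceQmc (s : ℕ) (k : ℤ) (n : ℕ) : ℝ :=
  sSup {r : ℝ | ∃ f : ℝ → ℂ, memPerHs s f ∧ perNormSq s f ≤ 1 ∧ r = ‖Ik k f - Aqmc k n f‖}

/-! ### Auxiliary lemmas -/

lemma hasDerivAt_cexp' (a : ℂ) (t : ℝ) :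
    HasDerivAt (fun x : ℝ => Complex.exp (a * (x : ℂ))) (a * Complex.exp (a * (t : ℂ))) t := by
  have h1 : HasDerivAt (fun x : ℝ => (x : ℂ)) 1 t := by
    simpa using (hasDerivAt_id t).ofReal_comp
  have h2 : HasDerivAt (fun x : ℝ => a * (x : ℂ)) a t := by
    simpa using h1.const_mul a
  simpa [mul_comm] using h2.cexp

lemma contDiff_cexp' (c a : ℂ) (n : ℕ∞) :
    ContDiff ℝ n (fun x : ℝ => c * Complex.exp (a * (x : ℂ))) :=
  contDiff_const.mul <| ((Complex.contDiff_exp (𝕜 := ℂ)).restrict_scalars ℝ).comp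
    ((contDiff_const (c := a)).mul Complex.ofRealCLM.contDiff)

lemma iter_cexp (c a : ℂ) (ℓ : ℕ) :
    iteratedDeriv ℓ (fun x : ℝ => c * Complex.exp (a * (x : ℂ)))
      = fun x : ℝ => c * a ^ ℓ * Complex.exp (a * (x : ℂ)) := by
  induction ℓ with
  | zero => funext x; simp
  | succ m ih =>
    rw [iteratedDeriv_succ, ih]
    funext x
    rw [((hasDerivAt_cexp' a x).const_mul (c * a ^ m)).deriv]
    ring

lemma exp_two_pi_int (d : ℤ) : Complex.exp (2 * Real.pi * Complex.I * (d : ℂ)) = 1 := by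
  rw [show (2 * (Real.pi:ℂ) * Complex.I * (d : ℂ)) = (d:ℂ) * (2 * (Real.pi:ℂ) * Complex.I) by
    ring]
  exact_mod_cast Complex.exp_int_mul_two_pi_mul_I d

lemma b_ne (d : ℤ) (hd : d ≠ 0) : 2 * (Real.pi:ℂ) * Complex.I * (d : ℂ) ≠ 0 := by
  apply mul_ne_zero (mul_ne_zero (mul_ne_zero two_ne_zero _) Complex.I_ne_zero)
    (Int.cast_ne_zero.mpr hd)
  exact_mod_cast Complex.ofReal_ne_zero.mpr Real.pi_ne_zero

lemma norm_exp_unit (z : ℂ) (hz : z.re = 0) : ‖Complex.exp z‖ = 1 := by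
  rw [Complex.norm_exp, hz, Real.exp_zero]

lemma Ik_cexp (k m : ℤ) (c : ℝ) (hmk : m ≠ k) :
    Ik k (fun x : ℝ => (c:ℂ) * Complex.exp (2 * Real.pi * Complex.I * (m : ℂ) * (x : ℂ))) = 0 := by
  have hb : 2 * (Real.pi:ℂ) * Complex.I * ((m - k : ℤ) : ℂ) ≠ 0 := b_ne _ (sub_ne_zero.mpr hmk)
  unfold Ik
  have hrw : ∀ x : ℝ, ((c:ℂ) * Complex.exp (2 * Real.pi * Complex.I * (m : ℂ) * (x : ℂ)))
      * Complex.exp (-(2 * Real.pi * Complex.I * (k : ℂ) * (x : ℂ)))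
      = (c:ℂ) * Complex.exp ((2 * Real.pi * Complex.I * ((m - k : ℤ) : ℂ)) * (x : ℂ)) := by
    intro x
    rw [mul_assoc, ← Complex.exp_add]
    congr 2
    push_cast; ring
  simp only [hrw]
  rw [intervalIntegral.integral_const_mul, integral_exp_mul_complex hb]
  rw [show (2 * (Real.pi:ℂ) * Complex.I * ((m - k : ℤ) : ℂ)) * (1:ℝ)
      = 2 * Real.pi * Complex.I * ((m - k : ℤ) : ℂ) by push_cast; ring,
    exp_two_pi_int]
  norm_num

lemma Aqmc_cexp (k m : ℤ) (n : ℕ) (hn : 1 ≤ n) (c : ℝ) (hdvd : (n:ℤ) ∣ (m - k)) :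
    Aqmc k n (fun x : ℝ => (c:ℂ) * Complex.exp (2 * Real.pi * Complex.I * (m : ℂ) * (x : ℂ)))
      = (c : ℂ) := by
  obtain ⟨d, hd⟩ := hdvd
  have hn0 : (n:ℂ) ≠ 0 := Nat.cast_ne_zero.mpr (by omega)
  unfold Aqmc
  have hterm : ∀ j ∈ Finset.Icc 1 n,
      ((c:ℂ) * Complex.exp (2 * Real.pi * Complex.I * (m : ℂ) * (((j:ℝ) / (n:ℝ) : ℝ) : ℂ)))
      * Complex.exp (-(2 * Real.pi * Complex.I * (k : ℂ) * ((j : ℂ) / (n : ℂ)))) = (c:ℂ) := by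
    intro j _
    rw [mul_assoc, ← Complex.exp_add]
    have harg : 2 * (Real.pi:ℂ) * Complex.I * (m : ℂ) * (((j:ℝ) / (n:ℝ) : ℝ) : ℂ)
        + -(2 * Real.pi * Complex.I * (k : ℂ) * ((j : ℂ) / (n : ℂ)))
        = 2 * Real.pi * Complex.I * ((d * j : ℤ) : ℂ) := by
      have hdc : ((m:ℂ) - (k:ℂ)) = (n:ℂ) * (d:ℂ) := by exact_mod_cast hd
      have h1 : (2:ℂ) * Real.pi * Complex.I * (m : ℂ) * (((j:ℝ)/(n:ℝ) : ℝ):ℂ)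
          + -(2 * Real.pi * Complex.I * (k : ℂ) * ((j:ℂ)/(n:ℂ)))
          = 2 * Real.pi * Complex.I * ((m:ℂ) - (k:ℂ)) * ((j:ℂ)/(n:ℂ)) := by
        push_cast; ring
      rw [h1, hdc]
      push_cast
      field_simp
    rw [harg, exp_two_pi_int, mul_one]
  rw [Finset.sum_congr rfl hterm, Finset.sum_const, Nat.card_Icc]
  simp only [Nat.add_sub_cancel, nsmul_eq_mul]
  field_simp

lemma ptbound (g : ℝ → ℂ) (hg : ContDiff ℝ 1 g) {x : ℝ} (hx : x ∈ Set.Icc (0:ℝ) 1) :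
    ‖g x‖ ≤ ‖∫ t in (0:ℝ)..1, g t‖ + ∫ t in (0:ℝ)..1, ‖deriv g t‖ := by
  have hgc : Continuous g := hg.continuous
  have hg' : Continuous (deriv g) := hg.continuous_deriv le_rfl
  have hdint : IntervalIntegrable (fun t => ‖deriv g t‖) volume 0 1 :=
    (hg'.norm).intervalIntegrable 0 1
  set C : ℝ := ∫ t in (0:ℝ)..1, ‖deriv g t‖ with hC
  have step : ∀ y ∈ Set.Icc (0:ℝ) 1, ‖g x - g y‖ ≤ C := by
    intro y hy
    have hftc : ∫ t in y..x, deriv g t = g x - g y := by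
      apply intervalIntegral.integral_deriv_eq_sub
      · intro t _; exact (hg.differentiable one_ne_zero) t
      · exact hg'.intervalIntegrable y x
    rw [← hftc]
    calc ‖∫ t in y..x, deriv g t‖ ≤ |∫ t in y..x, ‖deriv g t‖| :=
          intervalIntegral.norm_integral_le_abs_integral_norm
      _ ≤ C := by
          rcases le_total y x with h | h
          · rw [_root_.abs_of_nonneg (intervalIntegral.integral_nonneg h (fun t _ => norm_nonneg _))]
            exact intervalIntegral.integral_mono_interval hy.1 h hx.2
              (Filter.Eventually.of_forall fun t => norm_nonneg _) hdint
          · rw [intervalIntegral.integral_symm,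
              _root_.abs_of_nonpos (neg_nonpos.mpr (intervalIntegral.integral_nonneg h (fun t _ => norm_nonneg _))),
              neg_neg]
            exact intervalIntegral.integral_mono_interval hx.1 h hy.2
              (Filter.Eventually.of_forall fun t => norm_nonneg _) hdint
  have hkey : ‖g x - ∫ t in (0:ℝ)..1, g t‖ ≤ C := by
    have hrw : g x - ∫ t in (0:ℝ)..1, g t = ∫ t in (0:ℝ)..1, (g x - g t) := by
      rw [intervalIntegral.integral_sub (intervalIntegrable_const) (hgc.intervalIntegrable 0 1)]
      simp
    rw [hrw]
    have := intervalIntegral.norm_integral_le_of_norm_le_const (C := C)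
      (f := fun t => g x - g t) (a := (0:ℝ)) (b := 1) ?_
    · simpa using this
    · intro t ht
      have ht' : t ∈ Set.Icc (0:ℝ) 1 := by
        rcases Set.uIoc_subset_uIcc ht with h
        simpa [Set.uIcc_of_le (by norm_num : (0:ℝ) ≤ 1)] using h
      exact step t ht'
  calc ‖g x‖ = ‖(∫ t in (0:ℝ)..1, g t) + (g x - ∫ t in (0:ℝ)..1, g t)‖ := by ring_nf
    _ ≤ ‖∫ t in (0:ℝ)..1, g t‖ + ‖g x - ∫ t in (0:ℝ)..1, g t‖ := norm_add_le _ _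
    _ ≤ ‖∫ t in (0:ℝ)..1, g t‖ + C := by linarith

lemma supbound {s : ℕ} (hs : 1 ≤ s) (f : ℝ → ℂ) (hf : memPerHs s f)
    (hn : perNormSq s f ≤ 1) : ∀ x ∈ Set.Icc (0:ℝ) 1, ‖f x‖ ≤ 2 := by
  obtain ⟨hcd, hper⟩ := hf
  have hcont : ∀ m : ℕ, m ≤ s → Continuous (iteratedDeriv m f) := fun m hm =>
    hcd.continuous_iteratedDeriv m (by exact_mod_cast hm)
  have hint : ∀ m : ℕ, m ≤ s → IntervalIntegrable (fun t => ‖iteratedDeriv m f t‖) volume 0 1 :=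
    fun m hm => ((hcont m hm).norm).intervalIntegrable 0 1
  have hL2 : ∫ t in (0:ℝ)..1, ‖iteratedDeriv s f t‖^2 ≤ 1 := by
    have h0 : (0:ℝ) ≤ ‖∫ x in (0:ℝ)..1, f x‖^2 := sq_nonneg _
    unfold perNormSq at hn; linarith
  have hI1 : ‖∫ x in (0:ℝ)..1, f x‖ ≤ 1 := by
    have h0 : (0:ℝ) ≤ ∫ t in (0:ℝ)..1, ‖iteratedDeriv s f t‖^2 :=
      intervalIntegral.integral_nonneg (by norm_num) (fun t _ => sq_nonneg _)
    unfold perNormSq at hn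
    nlinarith [norm_nonneg (∫ x in (0:ℝ)..1, f x)]
  have hbase : ∫ t in (0:ℝ)..1, ‖iteratedDeriv s f t‖ ≤ 1 := by
    have hmono : ∫ t in (0:ℝ)..1, ‖iteratedDeriv s f t‖
        ≤ ∫ t in (0:ℝ)..1, (1 + ‖iteratedDeriv s f t‖^2)/2 := by
      apply intervalIntegral.integral_mono_on (by norm_num) (hint s le_rfl)
      · exact ((continuous_const.add ((hcont s le_rfl).norm.pow 2)).div_const 2).intervalIntegrable 0 1
      · intro t _; nlinarith [sq_nonneg (‖iteratedDeriv s f t‖ - 1)]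
    have : ∫ t in (0:ℝ)..1, (1 + ‖iteratedDeriv s f t‖^2)/2
        = (1 + ∫ t in (0:ℝ)..1, ‖iteratedDeriv s f t‖^2)/2 := by
      rw [intervalIntegral.integral_div, intervalIntegral.integral_add
        intervalIntegrable_const (by exact ((hcont s le_rfl).norm.pow 2).intervalIntegrable 0 1 : IntervalIntegrable (fun t => ‖iteratedDeriv s f t‖^2) volume 0 1)]
      simp
    rw [this] at hmono; linarith
  have hmean : ∀ m : ℕ, 1 ≤ m → m ≤ s → ∫ t in (0:ℝ)..1, iteratedDeriv m f t = 0 := by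
    intro m hm1 hms
    obtain ⟨p, rfl⟩ : ∃ p, m = p + 1 := ⟨m - 1, by omega⟩
    have hftc : ∫ t in (0:ℝ)..1, deriv (iteratedDeriv p f) t
        = iteratedDeriv p f 1 - iteratedDeriv p f 0 := by
      apply intervalIntegral.integral_deriv_eq_sub
      · intro t _
        exact (hcd.differentiable_iteratedDeriv p (by exact_mod_cast (by omega : p < s))) t
      · simpa [← iteratedDeriv_succ] using (hcont (p+1) hms).intervalIntegrable 0 1
    rw [iteratedDeriv_succ, hftc, hper p (by omega), sub_self]
  have hchain : ∀ j : ℕ, j < s → ∫ t in (0:ℝ)..1, ‖iteratedDeriv (s - j) f t‖ ≤ 1 := by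
    intro j
    induction j with
    | zero => intro _; simpa using hbase
    | succ p ih =>
      intro hps
      have hm : s - (p+1) + 1 = s - p := by omega
      set m := s - (p+1) with hmdef
      have hm1 : 1 ≤ m := by omega
      have hms : m ≤ s := by omega
      have hcd1 : ContDiff ℝ 1 (iteratedDeriv m f) := by
        rw [iteratedDeriv_eq_iterate]
        exact ContDiff.iterate_deriv' 1 m
          (hcd.of_le (by exact_mod_cast (by omega : 1 + m ≤ s)))
      have hpt : ∀ x ∈ Set.Icc (0:ℝ) 1, ‖iteratedDeriv m f x‖ ≤ 1 := by
        intro x hx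
        have := ptbound (iteratedDeriv m f) hcd1 hx
        rw [hmean m hm1 hms] at this
        simp only [norm_zero, zero_add] at this
        calc ‖iteratedDeriv m f x‖ ≤ ∫ t in (0:ℝ)..1, ‖deriv (iteratedDeriv m f) t‖ := this
          _ = ∫ t in (0:ℝ)..1, ‖iteratedDeriv (s - p) f t‖ := by
              rw [← iteratedDeriv_succ, hm]
          _ ≤ 1 := ih (by omega)
      calc ∫ t in (0:ℝ)..1, ‖iteratedDeriv m f t‖ ≤ ∫ t in (0:ℝ)..1, (1:ℝ) := by
            apply intervalIntegral.integral_mono_on (by norm_num) (hint m hms)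
              intervalIntegrable_const
            intro t ht; exact hpt t ht
        _ = 1 := by simp
  intro x hx
  have hcd1 : ContDiff ℝ 1 f := hcd.of_le (by exact_mod_cast hs)
  have := ptbound f hcd1 hx
  have hder : ∫ t in (0:ℝ)..1, ‖deriv f t‖ ≤ 1 := by
    have h1 := hchain (s-1) (by omega)
    have h2 : s - (s-1) = 1 := by omega
    rw [h2] at h1
    simpa [iteratedDeriv_one] using h1
  linarith

lemma wce_bddAbove (s : ℕ) (hs : 1 ≤ s) (k : ℤ) (n : ℕ) (hn1 : 1 ≤ n) :
    BddAbove {r : ℝ | ∃ f : ℝ → ℂ, memPerHs s f ∧ perNormSq s f ≤ 1 ∧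
      r = ‖Ik k f - Aqmc k n f‖} := by
  refine ⟨4, ?_⟩
  rintro r ⟨f, hf, hnorm, rfl⟩
  have hsup := supbound hs f hf hnorm
  have hIk : ‖Ik k f‖ ≤ 2 := by
    have := intervalIntegral.norm_integral_le_of_norm_le_const (C := 2)
      (f := fun x : ℝ => f x * Complex.exp (-(2 * Real.pi * Complex.I * (k : ℂ) * (x : ℂ))))
      (a := (0:ℝ)) (b := 1) ?_
    · simpa [Ik] using this
    · intro x hxo
      have hx : x ∈ Set.Icc (0:ℝ) 1 := by
        rcases Set.uIoc_subset_uIcc hxo with h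
        simpa [Set.uIcc_of_le (by norm_num : (0:ℝ) ≤ 1)] using h
      rw [norm_mul, norm_exp_unit _ (by simp), mul_one]
      exact hsup x hx
  have hAq : ‖Aqmc k n f‖ ≤ 2 := by
    unfold Aqmc
    rw [norm_mul]
    have hsum : ‖∑ j ∈ Finset.Icc 1 n, f (j / n)
        * Complex.exp (-(2 * Real.pi * Complex.I * (k : ℂ) * ((j : ℂ) / (n : ℂ))))‖
        ≤ ∑ j ∈ Finset.Icc 1 n, (2:ℝ) := by
      refine (norm_sum_le _ _).trans (Finset.sum_le_sum ?_)
      intro j hj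
      rw [Finset.mem_Icc] at hj
      have hx : (j:ℝ)/(n:ℝ) ∈ Set.Icc (0:ℝ) 1 := by
        constructor
        · positivity
        · rw [div_le_one (by exact_mod_cast (by omega : 0 < n))]
          exact_mod_cast hj.2
      have hexp : ‖Complex.exp (-(2 * Real.pi * Complex.I * (k : ℂ) * ((j : ℂ) / (n : ℂ))))‖ = 1 := by
        apply norm_exp_unit
        have : ((j:ℂ)/(n:ℂ)) = (((j:ℝ)/(n:ℝ) : ℝ) : ℂ) := by push_cast; ring
        rw [this]; simp
      rw [norm_mul, hexp, mul_one]
      exact hsup _ hx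
    rw [Finset.sum_const, Nat.card_Icc, Nat.add_sub_cancel, nsmul_eq_mul] at hsum
    have h1n : ‖(1 / (n:ℂ))‖ = 1 / (n:ℝ) := by
      rw [norm_div, norm_one, Complex.norm_natCast]
    rw [h1n]
    have hn0 : (0:ℝ) < n := by exact_mod_cast hn1
    calc 1 / (n:ℝ) * ‖∑ j ∈ Finset.Icc 1 n, f (j / n)
        * Complex.exp (-(2 * Real.pi * Complex.I * (k : ℂ) * ((j : ℂ) / (n : ℂ))))‖
        ≤ 1 / (n:ℝ) * ((n:ℝ) * 2) := by
          apply mul_le_mul_of_nonneg_left hsum (by positivity)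
      _ = 2 := by field_simp
  calc ‖Ik k f - Aqmc k n f‖ ≤ ‖Ik k f‖ + ‖Aqmc k n f‖ := norm_sub_le _ _
    _ ≤ 4 := by linarith


/-- For `1 ≤ n ≤ |k|`, the worst case error of the QMC rule on the unit ball of
`H̃ˢ` exceeds the initial error `(2π|k|)^{-s}`: the QMC rule is worse than the
zero algorithm. -/
theorem stmt_5 (s : ℕ) (hs : 1 ≤ s) (k : ℤ) (n : ℕ) (hn1 : 1 ≤ n)
    (hn2 : (n : ℤ) ≤ |k|) :
    wceQmc s k n > 1 / (2 * Real.pi * |(k : ℝ)|)^s := by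
  have hk0 : k ≠ 0 := by
    intro h; rw [h] at hn2; simp at hn2; omega
  set m : ℤ := k - Int.sign k * n with hmdef
  have habs : |m| = |k| - n := by
    rcases lt_trichotomy k 0 with h | h | h
    · rw [Int.sign_eq_neg_one_of_neg h] at hmdef
      rw [abs_of_neg h] at hn2 ⊢
      rw [abs_of_nonpos (by omega : m ≤ 0)]
      omega
    · exact absurd h hk0
    · rw [Int.sign_eq_one_of_pos h] at hmdef
      rw [abs_of_pos h] at hn2 ⊢
      rw [abs_of_nonneg (by omega : 0 ≤ m)]
      omega
  have hmk : m ≠ k := by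
    have h1 : Int.sign k = 1 ∨ Int.sign k = -1 := by
      rcases lt_trichotomy k 0 with h | h | h
      · right; exact Int.sign_eq_neg_one_of_neg h
      · exact absurd h hk0
      · left; exact Int.sign_eq_one_of_pos h
    rcases h1 with h | h <;> rw [hmdef, h] <;> intro hc <;> omega
  have hdvd : (n:ℤ) ∣ (m - k) := ⟨-Int.sign k, by rw [hmdef]; ring⟩
  have hmlt : |m| < |k| := by omega
  -- the witness
  set c : ℝ := if m = 0 then 1 else 1/(2*Real.pi*|(m:ℝ)|)^s with hcdef
  have hcpos : 0 < c := by
    rw [hcdef]; split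
    · norm_num
    · have hm0 : (m:ℝ) ≠ 0 := Int.cast_ne_zero.mpr (by assumption)
      have : 0 < |(m:ℝ)| := abs_pos.mpr hm0
      positivity
  set f₀ : ℝ → ℂ := fun x : ℝ => (c:ℂ) * Complex.exp (2 * Real.pi * Complex.I * (m : ℂ) * (x : ℂ))
    with hf₀
  have ha : (2 * (Real.pi:ℂ) * Complex.I * (m : ℂ)).re = 0 := by simp
  have hmem : memPerHs s f₀ := by
    constructor
    · exact contDiff_cexp' _ _ _
    · intro ℓ _
      rw [hf₀, iter_cexp]
      simp only
      rw [show ((2 * (Real.pi:ℂ) * Complex.I * (m:ℂ)) * ((0:ℝ):ℂ)) = 0 by push_cast; ring,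
        show ((2 * (Real.pi:ℂ) * Complex.I * (m:ℂ)) * ((1:ℝ):ℂ))
          = 2 * Real.pi * Complex.I * (m:ℂ) by push_cast; ring,
        exp_two_pi_int, Complex.exp_zero]
  have habsval : ‖(2 * Real.pi * Complex.I * (m : ℂ))‖ = 2 * Real.pi * |(m:ℝ)| := by
    simp [_root_.abs_of_nonneg Real.pi_nonneg]
  have hexpnorm : ∀ x : ℝ, ‖Complex.exp (2 * Real.pi * Complex.I * (m : ℂ) * (x : ℂ))‖ = 1 := by
    intro x
    apply norm_exp_unit
    simp
  have hnormsq : perNormSq s f₀ = 1 := by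
    unfold perNormSq
    have hL2 : ∫ x in (0:ℝ)..1, ‖iteratedDeriv s f₀ x‖^2
        = (c * (2 * Real.pi * |(m:ℝ)|)^s)^2 := by
      rw [hf₀, iter_cexp]
      have : ∀ x : ℝ, ‖(c:ℂ) * (2 * Real.pi * Complex.I * (m:ℂ))^s
          * Complex.exp (2 * Real.pi * Complex.I * (m:ℂ) * (x:ℂ))‖^2
          = (c * (2 * Real.pi * |(m:ℝ)|)^s)^2 := by
        intro x
        rw [norm_mul, norm_mul, hexpnorm, mul_one, norm_pow,
          habsval, Complex.norm_real, Real.norm_eq_abs,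
          _root_.abs_of_pos hcpos]
      simp only [this]
      rw [intervalIntegral.integral_const]
      simp
    rw [hL2]
    by_cases hm0 : m = 0
    · have hint : ∫ x in (0:ℝ)..1, f₀ x = (c:ℂ) := by
        rw [hf₀]
        simp only [hm0, Int.cast_zero, mul_zero, zero_mul, Complex.exp_zero, mul_one]
        rw [intervalIntegral.integral_const]
        simp
      have hs' : s ≠ 0 := by omega
      have hc1 : c = 1 := by rw [hcdef, if_pos hm0]
      rw [hint, hc1, hm0]
      norm_num [zero_pow hs']
    · have hint : ∫ x in (0:ℝ)..1, f₀ x = 0 := by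
        have := Ik_cexp 0 m c (by simpa using hm0)
        unfold Ik at this
        simpa [hf₀] using this
      rw [hint]
      have hm0' : (m:ℝ) ≠ 0 := Int.cast_ne_zero.mpr hm0
      have habs0 : 0 < 2 * Real.pi * |(m:ℝ)| := by
        have : 0 < |(m:ℝ)| := abs_pos.mpr hm0'
        positivity
      rw [hcdef, if_neg hm0]
      rw [norm_zero]
      field_simp
      norm_num
  have hIkval : Ik k f₀ = 0 := Ik_cexp k m c hmk
  have hAqval : Aqmc k n f₀ = (c:ℂ) := Aqmc_cexp k m n hn1 c hdvd
  have hdiff : ‖Ik k f₀ - Aqmc k n f₀‖ = c := by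
    rw [hIkval, hAqval, zero_sub, norm_neg, Complex.norm_real, Real.norm_eq_abs, _root_.abs_of_pos hcpos]
  have hmemS : c ∈ {r : ℝ | ∃ f : ℝ → ℂ, memPerHs s f ∧ perNormSq s f ≤ 1 ∧
      r = ‖Ik k f - Aqmc k n f‖} := ⟨f₀, hmem, le_of_eq hnormsq, hdiff.symm⟩
  have hle : c ≤ wceQmc s k n := le_csSup (wce_bddAbove s hs k n hn1) hmemS
  have hkr : (0:ℝ) < |(k:ℝ)| := by
    have : (k:ℝ) ≠ 0 := Int.cast_ne_zero.mpr hk0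
    exact abs_pos.mpr this
  have hkpow : 0 < (2 * Real.pi * |(k:ℝ)|)^s := by positivity
  have hfin : 1 / (2 * Real.pi * |(k:ℝ)|)^s < c := by
    rw [hcdef]
    by_cases hm0 : m = 0
    · rw [if_pos hm0]
      rw [div_lt_one hkpow]
      have h2pi : (1:ℝ) < 2 * Real.pi * |(k:ℝ)| := by
        have hk1 : (1:ℝ) ≤ |(k:ℝ)| := by
          have : (1:ℤ) ≤ |k| := by omega
          calc (1:ℝ) ≤ ((|k|:ℤ):ℝ) := by exact_mod_cast this
            _ = |(k:ℝ)| := by push_cast [Int.cast_abs]; ring_nf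
        nlinarith [Real.pi_gt_three]
      calc (1:ℝ) < 2 * Real.pi * |(k:ℝ)| := h2pi
        _ ≤ (2 * Real.pi * |(k:ℝ)|)^s := le_self_pow₀ (le_of_lt h2pi) (by omega)
    · rw [if_neg hm0]
      have hm0' : (m:ℝ) ≠ 0 := Int.cast_ne_zero.mpr hm0
      have hmr : 0 < |(m:ℝ)| := abs_pos.mpr hm0'
      have hmltr : |(m:ℝ)| < |(k:ℝ)| := by
        have h1 : |(m:ℝ)| = ((|m|:ℤ):ℝ) := by push_cast [Int.cast_abs]; ring_nf
        have h2 : |(k:ℝ)| = ((|k|:ℤ):ℝ) := by push_cast [Int.cast_abs]; ring_nf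
        rw [h1, h2]; exact_mod_cast hmlt
      apply div_lt_div_of_pos_left one_pos
      · positivity
      · apply pow_lt_pow_left₀ _ (by positivity) (by omega)
        nlinarith [Real.pi_gt_three]
  exact lt_of_lt_of_le hfin hle
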